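/- Let G be a finite simple graph, let ℋ be a set (with no repeated elements) of connected non-null subgraphs of G. Then tree-μ(G°[ℋ]) ≤ tree-μ(G). -/

import Mathlib

open SimpleGraph

namespace Paper

/-- A tree decomposition of a graph `G`. -/
structure TreeDecomp {V : Type} (G : SimpleGraph V) where
  ι : Type
  fin : Fintype ι
  tree : SimpleGraph ι
  isTree : tree.IsTree
  bag : ι → Set V
  mem_bag : ∀ v : V, ∃ t, v ∈ bag t
  edge_bag : ∀ ⦃u w : V⦄, G.Adj u w → ∃ t, u ∈ bag t ∧ w ∈ bag t
  coherent : ∀ v : V, (tree.induce {t | v ∈ bag t}).Connected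

/-- `M` is an induced matching in `G`: a set of edges, pairwise disjoint,
with no edge of `G` joining endpoints of distinct edges of `M`. -/
def IsInducedMatching {V : Type} (G : SimpleGraph V) (M : Finset (V × V)) : Prop :=
  (∀ p ∈ M, G.Adj p.1 p.2) ∧
    ∀ p ∈ M, ∀ q ∈ M, p ≠ q →
      (p.1 ≠ q.1 ∧ p.1 ≠ q.2 ∧ p.2 ≠ q.1 ∧ p.2 ≠ q.2) ∧
      (¬ G.Adj p.1 q.1 ∧ ¬ G.Adj p.1 q.2 ∧ ¬ G.Adj p.2 q.1 ∧ ¬ G.Adj p.2 q.2)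

/-- Every edge of `M` has an endpoint in `X`. -/
def Touches {V : Type} (M : Finset (V × V)) (X : Set V) : Prop :=
  ∀ p ∈ M, p.1 ∈ X ∨ p.2 ∈ X

/-- μ(𝒯): the maximum size of an induced matching of `G` all of whose edges
touch a common bag of the tree decomposition `D`. -/
noncomputable def mu {V : Type} (G : SimpleGraph V) (D : TreeDecomp G) : ℕ :=
  sSup {n | ∃ (t : D.ι) (M : Finset (V × V)),
    IsInducedMatching G M ∧ Touches M (D.bag t) ∧ M.card = n}

/-- Induced matching treewidth: minimum of μ(𝒯) over tree decompositions. -/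
noncomputable def treeMu {V : Type} (G : SimpleGraph V) : ℕ :=
  sInf {n | ∃ D : TreeDecomp G, mu G D = n}

/-- `S` is an independent set of `G`. -/
def IsIndepSet {V : Type} (G : SimpleGraph V) (S : Finset V) : Prop :=
  ∀ u ∈ S, ∀ v ∈ S, u ≠ v → ¬ G.Adj u v

/-- α(𝒯): the maximum size of an independent set of `G` contained in a bag. -/
noncomputable def alphaTD {V : Type} (G : SimpleGraph V) (D : TreeDecomp G) : ℕ :=
  sSup {n | ∃ (t : D.ι) (S : Finset V),
    IsIndepSet G S ∧ ↑S ⊆ D.bag t ∧ S.card = n}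

/-- Tree-independence number: minimum of α(𝒯) over tree decompositions. -/
noncomputable def treeAlpha {V : Type} (G : SimpleGraph V) : ℕ :=
  sInf {n | ∃ D : TreeDecomp G, alphaTD G D = n}

/-- The `k`-th power of `G`: distinct vertices adjacent iff their distance in `G`
is at most `k` (for `k = 0` this is the edgeless graph). -/
def power {V : Type} (G : SimpleGraph V) (k : ℕ) : SimpleGraph V :=
  SimpleGraph.fromRel (fun u v => G.Reachable u v ∧ G.dist u v ≤ k)

/-- The graph `G°[ℋ]` for a family `ℋ = {H j}` of subgraphs of `G`: vertices are
indices `j`, two distinct indices adjacent iff the subgraphs share a vertex or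
there is an edge of `G` between them. -/
def blowup {V J : Type} (G : SimpleGraph V) (H : J → G.Subgraph) : SimpleGraph J :=
  SimpleGraph.fromRel (fun i j =>
    ((H i).verts ∩ (H j).verts).Nonempty ∨
      ∃ u ∈ (H i).verts, ∃ v ∈ (H j).verts, G.Adj u v)


section Aux

variable {V J : Type} {G : SimpleGraph V}

lemma exists_adj_of_ne {H : G.Subgraph} (hH : H.Connected) {x w : V}
    (hx : x ∈ H.verts) (hw : w ∈ H.verts) (hne : w ≠ x) :
    ∃ y, H.Adj x y := by
  obtain ⟨W⟩ := hH ⟨x, hx⟩ ⟨w, hw⟩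
  cases W with
  | nil => exact absurd rfl hne
  | cons h _ => exact ⟨_, h⟩

lemma blowup_adj_of_meet {H : J → G.Subgraph} {a b : J} (hab : a ≠ b) {x : V}
    (hxa : x ∈ (H a).verts) (hxb : x ∈ (H b).verts) : (blowup G H).Adj a b := by
  rw [blowup, fromRel_adj]
  exact ⟨hab, Or.inl (Or.inl ⟨x, hxa, hxb⟩)⟩

lemma blowup_adj_of_edge {H : J → G.Subgraph} {a b : J} (hab : a ≠ b) {x y : V}
    (hxa : x ∈ (H a).verts) (hyb : y ∈ (H b).verts) (hxy : G.Adj x y) :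
    (blowup G H).Adj a b := by
  rw [blowup, fromRel_adj]
  exact ⟨hab, Or.inl (Or.inr ⟨x, hxa, y, hyb, hxy⟩)⟩

/-- pick a `G`-edge at a given vertex `x` of `H i` with the other endpoint in
`H i` or `H j`, assuming `i,j` adjacent in the blowup. -/
lemma choose_edge {H : J → G.Subgraph} (hinj : Function.Injective H)
    (hconn : ∀ j, (H j).Connected) {i j : J}
    (hadj : (blowup G H).Adj i j) {x : V} (hx : x ∈ (H i).verts) :
    ∃ y, G.Adj x y ∧ (y ∈ (H i).verts ∨ y ∈ (H j).verts) := by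
  rw [blowup, fromRel_adj] at hadj
  obtain ⟨hne, hrel⟩ := hadj
  by_cases hsing : ∃ w ∈ (H i).verts, w ≠ x
  · obtain ⟨w, hw, hwx⟩ := hsing
    obtain ⟨y, hy⟩ := exists_adj_of_ne (hconn i) hx hw hwx
    exact ⟨y, (H i).adj_sub hy, Or.inl ((H i).edge_vert hy.symm)⟩
  · push_neg at hsing
    -- (H i).verts = {x}
    have hxj : x ∈ (H j).verts → ∃ y, G.Adj x y ∧ (y ∈ (H i).verts ∨ y ∈ (H j).verts) := by
      intro hxj
      by_cases hsj : ∃ w ∈ (H j).verts, w ≠ x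
      · obtain ⟨w, hw, hwx⟩ := hsj
        obtain ⟨y, hy⟩ := exists_adj_of_ne (hconn j) hxj hw hwx
        exact ⟨y, (H j).adj_sub hy, Or.inr ((H j).edge_vert hy.symm)⟩
      · push_neg at hsj
        exfalso
        apply hne
        apply hinj
        have hvi : (H i).verts = {x} := Set.eq_singleton_iff_unique_mem.2 ⟨hx, hsing⟩
        have hvj : (H j).verts = {x} := Set.eq_singleton_iff_unique_mem.2 ⟨hxj, hsj⟩
        have hadji : ∀ (K : G.Subgraph), K.verts = {x} → ∀ a b, ¬ K.Adj a b := by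
          intro K hK a b hab
          have ha : a = x := by have := K.edge_vert hab; rwa [hK] at this
          have hb : b = x := by have := K.edge_vert hab.symm; rwa [hK] at this
          subst ha; subst hb
          exact G.loopless.irrefl _ (K.adj_sub hab)
        ext a b
        · rw [hvi, hvj]
        · simp only [hadji _ hvi, hadji _ hvj]
    rcases hrel with (⟨v, hvi, hvj⟩ | ⟨u, hu, v, hv, huv⟩) | (⟨v, hvj, hvi⟩ | ⟨u, hu, v, hv, huv⟩)
    · have : v = x := hsing v hvi
      exact hxj (this ▸ hvj)
    · have : u = x := hsing u hu
      exact ⟨v, this ▸ huv, Or.inr hv⟩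
    · have : v = x := hsing v hvi
      exact hxj (this ▸ hvj)
    · have : v = x := hsing v hv
      exact ⟨u, (this ▸ huv).symm, Or.inr hu⟩

lemma reach_mono {ι : Type} (T : SimpleGraph ι) {S S' : Set ι} (h : S ⊆ S')
    {a b : ι} (ha : a ∈ S) (hb : b ∈ S)
    (hr : (T.induce S).Reachable ⟨a, ha⟩ ⟨b, hb⟩) :
    (T.induce S').Reachable ⟨a, h ha⟩ ⟨b, h hb⟩ :=
  hr.map (T.induceHomOfLE h).toHom

/-- the set of nodes whose bag meets a connected subgraph induces a connected
subgraph of the decomposition tree. -/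
lemma bag_meet_connected (D : TreeDecomp G) {H : G.Subgraph} (hH : H.Connected) :
    (D.tree.induce {t | ∃ v ∈ H.verts, v ∈ D.bag t}).Connected := by
  set S : Set D.ι := {t | ∃ v ∈ H.verts, v ∈ D.bag t} with hS
  have hsub : ∀ {v : V}, v ∈ H.verts → {t | v ∈ D.bag t} ⊆ S := by
    intro v hv t ht
    exact ⟨v, hv, ht⟩
  have hsame : ∀ {v : V} (hv : v ∈ H.verts) (t1 t2 : D.ι)
      (h1 : v ∈ D.bag t1) (h2 : v ∈ D.bag t2),
      (D.tree.induce S).Reachable ⟨t1, ⟨v, hv, h1⟩⟩ ⟨t2, ⟨v, hv, h2⟩⟩ := by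
    intro v hv t1 t2 h1 h2
    have := (D.coherent v).preconnected ⟨t1, h1⟩ ⟨t2, h2⟩
    exact reach_mono D.tree (hsub hv) h1 h2 this
  have key : ∀ (a b : H.verts) (W : H.coe.Walk a b) (t1 t2 : D.ι)
      (h1 : (a : V) ∈ D.bag t1) (h2 : (b : V) ∈ D.bag t2),
      (D.tree.induce S).Reachable ⟨t1, ⟨a, a.2, h1⟩⟩ ⟨t2, ⟨b, b.2, h2⟩⟩ := by
    intro a b W
    induction W with
    | @nil u => intro t1 t2 h1 h2; exact hsame u.2 t1 t2 h1 h2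
    | @cons u c d h W ih =>
      intro t1 t2 h1 h2
      have hGadj : G.Adj (u : V) (c : V) := H.adj_sub h
      obtain ⟨t, hut, hct⟩ := D.edge_bag hGadj
      exact (hsame u.2 t1 t h1 hut).trans (ih t t2 hct h2)
  rw [connected_iff]
  refine ⟨?_, ?_⟩
  · rintro ⟨t1, ht1⟩ ⟨t2, ht2⟩
    obtain ⟨v1, hv1H, hv1⟩ := ht1
    obtain ⟨v2, hv2H, hv2⟩ := ht2
    obtain ⟨W⟩ := hH ⟨v1, hv1H⟩ ⟨v2, hv2H⟩
    exact key ⟨v1, hv1H⟩ ⟨v2, hv2H⟩ W t1 t2 hv1 hv2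
  · obtain ⟨v, hv⟩ := hH.nonempty
    obtain ⟨t, ht⟩ := D.mem_bag v
    exact ⟨⟨t, v, hv, ht⟩⟩

/-- the tree decomposition of the blowup induced by a decomposition of `G`. -/
noncomputable def blowupDecomp (H : J → G.Subgraph)
    (hconn : ∀ j, (H j).Connected) (D : TreeDecomp G) :
    TreeDecomp (blowup G H) where
  ι := D.ι
  fin := D.fin
  tree := D.tree
  isTree := D.isTree
  bag t := {j | ∃ v ∈ (H j).verts, v ∈ D.bag t}
  mem_bag j := by
    obtain ⟨v, hv⟩ := (hconn j).nonempty
    obtain ⟨t, ht⟩ := D.mem_bag v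
    exact ⟨t, v, hv, ht⟩
  edge_bag i j hadj := by
    rw [blowup, fromRel_adj] at hadj
    rcases hadj.2 with (⟨v, hvi, hvj⟩ | ⟨u, hu, v, hv, huv⟩) |
        (⟨v, hvj, hvi⟩ | ⟨u, hu, v, hv, huv⟩)
    · obtain ⟨t, ht⟩ := D.mem_bag v
      exact ⟨t, ⟨v, hvi, ht⟩, ⟨v, hvj, ht⟩⟩
    · obtain ⟨t, hut, hvt⟩ := D.edge_bag huv
      exact ⟨t, ⟨u, hu, hut⟩, ⟨v, hv, hvt⟩⟩
    · obtain ⟨t, ht⟩ := D.mem_bag v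
      exact ⟨t, ⟨v, hvi, ht⟩, ⟨v, hvj, ht⟩⟩
    · obtain ⟨t, hut, hvt⟩ := D.edge_bag huv
      exact ⟨t, ⟨v, hv, hvt⟩, ⟨u, hu, hut⟩⟩
  coherent j := bag_meet_connected D (hconn j)

lemma cross_pair {H : J → G.Subgraph} {M' : Finset (J × J)}
    (hM' : IsInducedMatching (blowup G H) M') {p q : J × J}
    (hp : p ∈ M') (hq : q ∈ M') (hpq : p ≠ q) {x y : V}
    (hx : x ∈ (H p.1).verts ∨ x ∈ (H p.2).verts)
    (hy : y ∈ (H q.1).verts ∨ y ∈ (H q.2).verts) :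
    x ≠ y ∧ ¬ G.Adj x y := by
  obtain ⟨⟨d11, d12, d21, d22⟩, n11, n12, n21, n22⟩ := hM'.2 p hp q hq hpq
  rcases hx with hx | hx <;> rcases hy with hy | hy
  · exact ⟨fun h => n11 (blowup_adj_of_meet d11 hx (h ▸ hy)),
      fun h => n11 (blowup_adj_of_edge d11 hx hy h)⟩
  · exact ⟨fun h => n12 (blowup_adj_of_meet d12 hx (h ▸ hy)),
      fun h => n12 (blowup_adj_of_edge d12 hx hy h)⟩
  · exact ⟨fun h => n21 (blowup_adj_of_meet d21 hx (h ▸ hy)),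
      fun h => n21 (blowup_adj_of_edge d21 hx hy h)⟩
  · exact ⟨fun h => n22 (blowup_adj_of_meet d22 hx (h ▸ hy)),
      fun h => n22 (blowup_adj_of_edge d22 hx hy h)⟩

end Aux


/-- if `ℋ` is a set (injective family) of connected non-null
subgraphs of `G`, then tree-μ(G°[ℋ]) ≤ tree-μ(G). -/
theorem stmt0 {V J : Type} [Fintype V] [Fintype J] (G : SimpleGraph V)
    (H : J → G.Subgraph) (hinj : Function.Injective H)
    (hconn : ∀ j, (H j).Connected) :
    treeMu (blowup G H) ≤ treeMu G := by
  classical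
  -- the trivial tree decomposition of G
  have hGD : Nonempty (TreeDecomp G) := by
    refine ⟨⟨Unit, inferInstance, ⊥, ⟨(connected_iff _).mpr
      ⟨fun a b => by rw [Subsingleton.elim a b], ⟨()⟩⟩,
      isAcyclic_bot⟩, fun _ => Set.univ, fun v => ⟨(), trivial⟩,
      fun u w _ => ⟨(), trivial, trivial⟩, fun v => ?_⟩⟩
    rw [connected_iff]
    refine ⟨fun a b => by rw [Subsingleton.elim a b], ⟨⟨(), trivial⟩⟩⟩
  have hne : {n | ∃ D : TreeDecomp G, mu G D = n}.Nonempty := ⟨_, hGD.some, rfl⟩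
  obtain ⟨D, hD⟩ := Nat.sInf_mem hne
  have h2 : treeMu G = mu G D := hD.symm
  rw [h2]
  -- suffices: mu of the blowup decomposition ≤ mu G D
  have h1 : treeMu (blowup G H) ≤ mu (blowup G H) (blowupDecomp H hconn D) :=
    Nat.sInf_le ⟨blowupDecomp H hconn D, rfl⟩
  refine le_trans h1 ?_
  -- now prove mu (blowup G H) (blowupDecomp H hconn D) ≤ mu G D
  unfold mu
  have hbdd : BddAbove {n | ∃ (t : D.ι) (M : Finset (V × V)),
      IsInducedMatching G M ∧ Touches M (D.bag t) ∧ M.card = n} := by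
    refine ⟨Fintype.card (V × V), ?_⟩
    rintro n ⟨t, M, _, _, rfl⟩
    exact le_trans (Finset.card_le_univ M) (le_of_eq (Finset.card_univ))
  have hne' : {n | ∃ (t : (blowupDecomp H hconn D).ι) (M : Finset (J × J)),
      IsInducedMatching (blowup G H) M ∧ Touches M ((blowupDecomp H hconn D).bag t)
        ∧ M.card = n}.Nonempty := by
    obtain ⟨t⟩ := D.isTree.isConnected.nonempty
    exact ⟨0, t, ∅, ⟨fun p hp => absurd hp (Finset.notMem_empty p),
      fun p hp => absurd hp (Finset.notMem_empty p)⟩,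
      fun p hp => absurd hp (Finset.notMem_empty p), Finset.card_empty⟩
  refine csSup_le hne' ?_
  rintro n ⟨t, M', hM', htouch, rfl⟩
  refine le_csSup hbdd ?_
  -- construct the matching in G
  have hchoice : ∀ p ∈ M', ∃ e : V × V, G.Adj e.1 e.2 ∧ e.1 ∈ D.bag t ∧
      (e.1 ∈ (H p.1).verts ∨ e.1 ∈ (H p.2).verts) ∧
      (e.2 ∈ (H p.1).verts ∨ e.2 ∈ (H p.2).verts) := by
    intro p hp
    have hadj : (blowup G H).Adj p.1 p.2 := hM'.1 p hp
    rcases htouch p hp with ⟨x, hxv, hxb⟩ | ⟨x, hxv, hxb⟩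
    · obtain ⟨y, hGxy, hy⟩ := choose_edge hinj hconn hadj hxv
      exact ⟨(x, y), hGxy, hxb, Or.inl hxv, hy⟩
    · obtain ⟨y, hGxy, hy⟩ := choose_edge hinj hconn hadj.symm hxv
      exact ⟨(x, y), hGxy, hxb, Or.inr hxv, hy.symm⟩
  set f : {p // p ∈ M'} → V × V := fun p => (hchoice p.1 p.2).choose with hf
  have hfspec : ∀ p : {p // p ∈ M'}, G.Adj (f p).1 (f p).2 ∧ (f p).1 ∈ D.bag t ∧
      ((f p).1 ∈ (H p.1.1).verts ∨ (f p).1 ∈ (H p.1.2).verts) ∧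
      ((f p).2 ∈ (H p.1.1).verts ∨ (f p).2 ∈ (H p.1.2).verts) :=
    fun p => (hchoice p.1 p.2).choose_spec
  have hinjf : Function.Injective f := by
    intro p q hfpq
    by_contra hpqne
    have hpq : p.1 ≠ q.1 := fun h => hpqne (Subtype.ext h)
    have := cross_pair hM' p.2 q.2 hpq (hfspec p).2.2.1 (hfspec q).2.2.1
    exact this.1 (by rw [hfpq])
  refine ⟨t, M'.attach.image f, ⟨?_, ?_⟩, ?_, ?_⟩
  · rintro e he
    obtain ⟨p, _, rfl⟩ := Finset.mem_image.1 he
    exact (hfspec p).1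
  · rintro e he e' he' hee'
    obtain ⟨p, _, rfl⟩ := Finset.mem_image.1 he
    obtain ⟨q, _, rfl⟩ := Finset.mem_image.1 he'
    have hpq : p.1 ≠ q.1 := fun h => hee' (congrArg f (Subtype.ext h))
    obtain ⟨hp1, hpb1, hp21, hp22⟩ := hfspec p
    obtain ⟨hq1, hqb1, hq21, hq22⟩ := hfspec q
    have c11 := cross_pair hM' p.2 q.2 hpq hp21 hq21
    have c12 := cross_pair hM' p.2 q.2 hpq hp21 hq22
    have c21 := cross_pair hM' p.2 q.2 hpq hp22 hq21
    have c22 := cross_pair hM' p.2 q.2 hpq hp22 hq22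
    exact ⟨⟨c11.1, c12.1, c21.1, c22.1⟩, c11.2, c12.2, c21.2, c22.2⟩
  · rintro e he
    obtain ⟨p, _, rfl⟩ := Finset.mem_image.1 he
    exact Or.inl (hfspec p).2.1
  · rw [Finset.card_image_of_injective _ hinjf, Finset.card_attach]



end Paper
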